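/- Let n ≥ 2, k algebraically closed of characteristic 0, Q a primitive n-th root of unity. Let B(Q) be the k-algebra generated by ξ, η, a with relations a^n = 1, ξ^n = 1, η^n = 1, ξa = Qaξ, ηa = Qaη, and ξη = E_0^{-1}E_{-1} ηξ, where E_r are the elements of k[⟨a⟩] defined by E_r = Σ_{k=0}^{n-2} 𝟏_{k-r} + Q𝟏_{n-1-r} (𝟏_s the primitive idempotents of k[⟨a⟩] with a𝟏_s = Q^s 𝟏_s). Then the elements {a^i ξ^j η^k : 0 ≤ i,j,k ≤ n-1} span B(Q); in particular dim_k B(Q) ≤ n³. -/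

import Mathlib

open Finset

/-- The idempotent 𝟏ₛ of k[⟨a⟩], as a polynomial in the generator a = ι 0
    of the free algebra on three generators a, ξ, η. -/
noncomputable def oneF (k : Type*) [Field k] (n : ℕ) (Q : k) (s : ZMod n) :
    FreeAlgebra k (Fin 3) :=
  ((n : k))⁻¹ • ∑ j ∈ range n, (Q ^ (s.val * j))⁻¹ • FreeAlgebra.ι k 0 ^ j

/-- The element E_r = Σ_{m=0}^{n-2} 𝟏_{m-r} + Q·𝟏_{n-1-r}, as a polynomial
    in a = ι 0. -/
noncomputable def EF (k : Type*) [Field k] (n : ℕ) (Q : k) (r : ZMod n) :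
    FreeAlgebra k (Fin 3) :=
  (∑ m ∈ range (n - 1), oneF k n Q ((m : ZMod n) - r)) +
    Q • oneF k n Q (((n : ZMod n) - 1) - r)

/-- The defining relations of the algebra B(Q): aⁿ = ξⁿ = ηⁿ = 1,
    ξa = Q·aξ, ηa = Q·aη, and E₀·ξη = E₋₁·ηξ (equivalent to
    ξη = E₀⁻¹E₋₁·ηξ since E₀ is invertible). Here a = ι 0, ξ = ι 1, η = ι 2. -/
inductive BRel (k : Type*) [Field k] (n : ℕ) (Q : k) :
    FreeAlgebra k (Fin 3) → FreeAlgebra k (Fin 3) → Prop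
  | apow : BRel k n Q (FreeAlgebra.ι k 0 ^ n) 1
  | xipow : BRel k n Q (FreeAlgebra.ι k 1 ^ n) 1
  | etapow : BRel k n Q (FreeAlgebra.ι k 2 ^ n) 1
  | xia : BRel k n Q (FreeAlgebra.ι k 1 * FreeAlgebra.ι k 0)
      (Q • (FreeAlgebra.ι k 0 * FreeAlgebra.ι k 1))
  | etaa : BRel k n Q (FreeAlgebra.ι k 2 * FreeAlgebra.ι k 0)
      (Q • (FreeAlgebra.ι k 0 * FreeAlgebra.ι k 2))
  | xieta : BRel k n Q
      (EF k n Q 0 * (FreeAlgebra.ι k 1 * FreeAlgebra.ι k 2))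
      (EF k n Q (-1) * (FreeAlgebra.ι k 2 * FreeAlgebra.ι k 1))

/-- The algebra B(Q). -/
def BAlgebra (k : Type*) [Field k] (n : ℕ) (Q : k) : Type _ :=
  RingQuot (BRel k n Q)

noncomputable instance (k : Type*) [Field k] (n : ℕ) (Q : k) :
    Ring (BAlgebra k n Q) := by unfold BAlgebra; infer_instance

noncomputable instance (k : Type*) [Field k] (n : ℕ) (Q : k) :
    Algebra k (BAlgebra k n Q) := by unfold BAlgebra; infer_instance

/-- The generator a of B(Q). -/
noncomputable def Ba (k : Type*) [Field k] (n : ℕ) (Q : k) : BAlgebra k n Q :=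
  RingQuot.mkAlgHom k (BRel k n Q) (FreeAlgebra.ι k 0)

/-- The generator ξ of B(Q). -/
noncomputable def Bxi (k : Type*) [Field k] (n : ℕ) (Q : k) : BAlgebra k n Q :=
  RingQuot.mkAlgHom k (BRel k n Q) (FreeAlgebra.ι k 1)

/-- The generator η of B(Q). -/
noncomputable def Beta (k : Type*) [Field k] (n : ℕ) (Q : k) : BAlgebra k n Q :=
  RingQuot.mkAlgHom k (BRel k n Q) (FreeAlgebra.ι k 2)
section Helpers

noncomputable def BmulL {k : Type*} [Field k] {n : ℕ} {Q : k} (g : BAlgebra k n Q) :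
    BAlgebra k n Q →ₗ[k] BAlgebra k n Q :=
  { toFun := fun w => g * w, map_add' := mul_add g, map_smul' := fun c w => mul_smul_comm c g w }

noncomputable def BmulR {k : Type*} [Field k] {n : ℕ} {Q : k} (g : BAlgebra k n Q) :
    BAlgebra k n Q →ₗ[k] BAlgebra k n Q :=
  { toFun := fun w => w * g, map_add' := fun u v => add_mul u v g,
    map_smul' := fun c w => smul_mul_assoc c w g }

@[simp] lemma BmulL_apply {k : Type*} [Field k] {n : ℕ} {Q : k} (g w : BAlgebra k n Q) :
    BmulL g w = g * w := rfl

@[simp] lemma BmulR_apply {k : Type*} [Field k] {n : ℕ} {Q : k} (g w : BAlgebra k n Q) :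
    BmulR g w = w * g := rfl

open Polynomial

/-- Polynomial counterpart of `oneF`. -/
noncomputable def onePoly (k : Type*) [Field k] (n : ℕ) (Q : k) (s : ZMod n) : k[X] :=
  ((n : k))⁻¹ • ∑ j ∈ Finset.range n, (Q ^ (s.val * j))⁻¹ • (X : k[X]) ^ j

/-- Polynomial counterpart of `EF`. -/
noncomputable def Epoly (k : Type*) [Field k] (n : ℕ) (Q : k) (r : ZMod n) : k[X] :=
  (∑ m ∈ Finset.range (n - 1), onePoly k n Q ((m : ZMod n) - r)) +
    Q • onePoly k n Q (((n : ZMod n) - 1) - r)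

lemma pow_reduce {A : Type*} [Monoid A] {x : A} {n : ℕ} (hn : 0 < n) (hx : x ^ n = 1)
    (m : ℕ) : x ^ m = x ^ (m % n) := by
  conv_lhs => rw [← Nat.div_add_mod m n]
  rw [pow_add, pow_mul, hx, one_pow, one_mul]

lemma swap_pow {k A : Type*} [CommSemiring k] [Semiring A] [Algebra k A] {q : k} {a x : A}
    (h : x * a = q • (a * x)) (i : ℕ) : x * a ^ i = q ^ i • (a ^ i * x) := by
  induction i with
  | zero => simp
  | succ i ih =>
    calc x * a ^ (i + 1) = (x * a ^ i) * a := by rw [pow_succ, mul_assoc]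
    _ = (q ^ i • (a ^ i * x)) * a := by rw [ih]
    _ = q ^ i • (a ^ i * (x * a)) := by rw [smul_mul_assoc, mul_assoc]
    _ = q ^ i • (a ^ i * (q • (a * x))) := by rw [h]
    _ = q ^ (i + 1) • (a ^ (i + 1) * x) := by
        rw [mul_smul_comm, smul_smul, ← mul_assoc, ← pow_succ, ← pow_succ]

lemma map_span_mem {R M : Type*} [Semiring R] [AddCommMonoid M] [Module R M]
    (f : M →ₗ[R] M) {s : Set M} {y : M} (hy : y ∈ Submodule.span R s)
    {T : Submodule R M} (h : ∀ z ∈ s, f z ∈ T) : f y ∈ T := by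
  have h2 : Submodule.span R s ≤ T.comap f := Submodule.span_le.2 fun z hz => h z hz
  exact h2 hy

end Helpers

section Eval

open Polynomial

variable {k : Type*} [Field k] {n : ℕ} {Q : k}

lemma eval_onePoly [CharZero k] (hn : 2 ≤ n) (hQ : IsPrimitiveRoot Q n) (s : ZMod n) (t : ℕ) :
    (onePoly k n Q s).eval (Q ^ t) = if (t : ZMod n) = s then 1 else 0 := by
  haveI : NeZero n := ⟨by omega⟩
  have hn0 : (n : k) ≠ 0 := Nat.cast_ne_zero.mpr (by omega)
  have hQ0 : Q ≠ 0 := hQ.ne_zero (by omega)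
  have hQn : Q ^ n = 1 := hQ.pow_eq_one
  set z := Q ^ t * (Q ^ s.val)⁻¹ with hzdef
  have key : ∀ j, (((Q ^ (s.val * j))⁻¹ • (X : k[X]) ^ j)).eval (Q ^ t) = z ^ j := by
    intro j
    rw [smul_eq_C_mul, eval_mul, eval_C, eval_pow, eval_X, hzdef, mul_pow, inv_pow, pow_mul]
    ring
  have hsum : (onePoly k n Q s).eval (Q ^ t) = (n : k)⁻¹ * ∑ j ∈ Finset.range n, z ^ j := by
    rw [onePoly, smul_eq_C_mul, eval_mul, eval_C, eval_finset_sum]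
    congr 1
    exact Finset.sum_congr rfl fun j _ => key j
  have hQt : Q ^ t = Q ^ ((t : ZMod n)).val := by
    rw [ZMod.val_natCast]
    exact pow_reduce (by omega) hQn t
  by_cases h : (t : ZMod n) = s
  · have hz1 : z = 1 := by
      rw [hzdef, hQt, h, mul_inv_cancel₀ (pow_ne_zero _ hQ0)]
    rw [hsum, hz1, if_pos h]
    simp [inv_mul_cancel₀ hn0]
  · have hz1 : z ≠ 1 := by
      intro hz
      apply h
      have h3 : Q ^ t = Q ^ s.val := (mul_inv_eq_one₀ (pow_ne_zero _ hQ0)).mp hz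
      rw [hQt] at h3
      have h4 : ((t : ZMod n)).val = s.val :=
        hQ.pow_inj (ZMod.val_lt _) (ZMod.val_lt _) h3
      calc (t : ZMod n) = (((t : ZMod n)).val : ZMod n) := (ZMod.natCast_zmod_val _).symm
      _ = (s.val : ZMod n) := by rw [h4]
      _ = s := ZMod.natCast_zmod_val _
    have hzn : z ^ n = 1 := by
      rw [hzdef, mul_pow, inv_pow, ← pow_mul, ← pow_mul, mul_comm t n, mul_comm s.val n,
        pow_mul, pow_mul, hQn, one_pow, one_pow, inv_one, mul_one]
    have hgeom : ∑ j ∈ Finset.range n, z ^ j = 0 := by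
      have h2 := geom_sum_mul z n
      rw [hzn, sub_self] at h2
      rcases mul_eq_zero.mp h2 with h3 | h3
      · exact h3
      · exact absurd (sub_eq_zero.mp h3) hz1
    rw [hsum, hgeom, mul_zero, if_neg h]

lemma eval_Epoly_ne [CharZero k] (hn : 2 ≤ n) (hQ : IsPrimitiveRoot Q n) (r : ZMod n) (t : ℕ) :
    (Epoly k n Q r).eval (Q ^ t) ≠ 0 := by
  haveI : NeZero n := ⟨by omega⟩
  have hQ0 : Q ≠ 0 := hQ.ne_zero (by omega)
  have hcast : ((n - 1 : ℕ) : ZMod n) = (n : ZMod n) - 1 := by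
    rw [Nat.cast_sub (by omega : 1 ≤ n), Nat.cast_one]
  have heval : (Epoly k n Q r).eval (Q ^ t) =
      (∑ m ∈ Finset.range (n - 1), if (t : ZMod n) = (m : ZMod n) - r then (1 : k) else 0) +
        Q * (if (t : ZMod n) = ((n : ZMod n) - 1) - r then 1 else 0) := by
    rw [Epoly, eval_add, eval_finset_sum, smul_eq_C_mul, eval_mul, eval_C]
    congr 1
    · exact Finset.sum_congr rfl fun m _ => eval_onePoly hn hQ _ t
    · rw [eval_onePoly hn hQ _ t]
  rw [heval]
  by_cases hcase : (t : ZMod n) + r = (n : ZMod n) - 1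
  · have h2 : (t : ZMod n) = ((n : ZMod n) - 1) - r := by rw [← hcase]; ring
    have hsum0 : ∀ m ∈ Finset.range (n - 1),
        (if (t : ZMod n) = (m : ZMod n) - r then (1 : k) else 0) = 0 := by
      intro m hm
      rw [if_neg]
      intro hme
      have h3 : (m : ZMod n) = ((n - 1 : ℕ) : ZMod n) := by
        rw [hcast, ← hcase, hme]; ring
      have h4 := congrArg ZMod.val h3
      rw [ZMod.val_natCast, ZMod.val_natCast] at h4
      have hm1 : m < n - 1 := Finset.mem_range.mp hm
      rw [Nat.mod_eq_of_lt (by omega), Nat.mod_eq_of_lt (by omega)] at h4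
      omega
    rw [Finset.sum_eq_zero hsum0, if_pos h2, zero_add, mul_one]
    exact hQ0
  · have h2 : ¬((t : ZMod n) = ((n : ZMod n) - 1) - r) := by
      intro h3; apply hcase; rw [h3]; ring
    rw [if_neg h2, mul_zero, add_zero]
    set u := (t : ZMod n) + r with hu
    have huval : u.val < n - 1 := by
      have h4 : u.val < n := ZMod.val_lt u
      have h5 : u.val ≠ n - 1 := by
        intro h6
        apply hcase
        calc (t : ZMod n) + r = u := rfl
        _ = (u.val : ZMod n) := (ZMod.natCast_zmod_val _).symm
        _ = ((n - 1 : ℕ) : ZMod n) := by rw [h6]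
        _ = (n : ZMod n) - 1 := hcast
      omega
    have hsum1 : (∑ m ∈ Finset.range (n - 1),
        if (t : ZMod n) = (m : ZMod n) - r then (1 : k) else 0) = 1 := by
      rw [Finset.sum_eq_single u.val]
      · rw [if_pos]
        rw [ZMod.natCast_zmod_val]
        rw [hu]; ring
      · intro m hm hne
        rw [if_neg]
        intro hme
        have h3 : (m : ZMod n) = u := by rw [hu, hme]; ring
        have h4 := congrArg ZMod.val h3
        have hm1 : m < n - 1 := Finset.mem_range.mp hm
        rw [ZMod.val_natCast, Nat.mod_eq_of_lt (by omega)] at h4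
        exact hne h4
      · intro hnot
        exact absurd (Finset.mem_range.mpr huval) hnot
    rw [hsum1]
    exact one_ne_zero

end Eval

section Relations

open Polynomial

variable {k : Type*} [Field k] {n : ℕ} {Q : k}

lemma Ba_pow_n : (Ba k n Q) ^ n = 1 := by
  have h := RingQuot.mkAlgHom_rel k (BRel.apow (k := k) (n := n) (Q := Q))
  rw [map_pow, map_one] at h
  exact h

lemma Bxi_pow_n : (Bxi k n Q) ^ n = 1 := by
  have h := RingQuot.mkAlgHom_rel k (BRel.xipow (k := k) (n := n) (Q := Q))
  rw [map_pow, map_one] at h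
  exact h

lemma Beta_pow_n : (Beta k n Q) ^ n = 1 := by
  have h := RingQuot.mkAlgHom_rel k (BRel.etapow (k := k) (n := n) (Q := Q))
  rw [map_pow, map_one] at h
  exact h

lemma Bxi_Ba : Bxi k n Q * Ba k n Q = Q • (Ba k n Q * Bxi k n Q) := by
  have h := RingQuot.mkAlgHom_rel k (BRel.xia (k := k) (n := n) (Q := Q))
  rw [map_mul, map_smul, map_mul] at h
  exact h

lemma Beta_Ba : Beta k n Q * Ba k n Q = Q • (Ba k n Q * Beta k n Q) := by
  have h := RingQuot.mkAlgHom_rel k (BRel.etaa (k := k) (n := n) (Q := Q))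
  rw [map_mul, map_smul, map_mul] at h
  exact h

lemma mk_EF (r : ZMod n) : RingQuot.mkAlgHom k (BRel k n Q) (EF k n Q r) =
    aeval (Ba k n Q) (Epoly k n Q r) := by
  simp only [EF, Epoly, oneF, onePoly, map_add, map_smul, map_sum, map_pow, aeval_X]
  rfl

lemma key_rel : aeval (Ba k n Q) (Epoly k n Q 0) * (Bxi k n Q * Beta k n Q) =
    aeval (Ba k n Q) (Epoly k n Q (-1)) * (Beta k n Q * Bxi k n Q) := by
  have h := RingQuot.mkAlgHom_rel k (BRel.xieta (k := k) (n := n) (Q := Q))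
  rw [map_mul, map_mul, map_mul, map_mul, mk_EF, mk_EF] at h
  exact h

lemma exists_g [CharZero k] (hn : 2 ≤ n) (hQ : IsPrimitiveRoot Q n) : ∃ g : k[X],
    aeval (Ba k n Q) g * aeval (Ba k n Q) (Epoly k n Q (-1)) = 1 := by
  haveI : NeZero n := ⟨by omega⟩
  have hcop : IsCoprime (Epoly k n Q (-1)) (X ^ n - 1 : k[X]) := by
    rw [X_pow_sub_one_eq_prod (by omega : 0 < n) hQ]
    apply IsCoprime.prod_right
    intro ζ hζ
    have hζn : ζ ^ n = 1 := (Polynomial.mem_nthRootsFinset (by omega : 0 < n) (1 : k)).mp hζ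
    obtain ⟨t, ht, rfl⟩ := hQ.eq_pow_of_pow_eq_one hζn
    refine ((Polynomial.irreducible_X_sub_C _).coprime_iff_not_dvd.mpr ?_).symm
    intro hdvd
    exact eval_Epoly_ne hn hQ (-1) t (Polynomial.dvd_iff_isRoot.mp hdvd)
  obtain ⟨u, v, huv⟩ := hcop
  refine ⟨u, ?_⟩
  have h2 := congrArg (aeval (Ba k n Q)) huv
  simpa [map_add, map_mul, map_sub, map_pow, map_one, aeval_X, Ba_pow_n] using h2

lemma exists_C [CharZero k] (hn : 2 ≤ n) (hQ : IsPrimitiveRoot Q n) : ∃ C : k[X],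
    Beta k n Q * Bxi k n Q = aeval (Ba k n Q) C * (Bxi k n Q * Beta k n Q) := by
  obtain ⟨g, hg⟩ := exists_g hn hQ
  refine ⟨g * Epoly k n Q 0, ?_⟩
  have h1 : aeval (Ba k n Q) g *
      (aeval (Ba k n Q) (Epoly k n Q (-1)) * (Beta k n Q * Bxi k n Q)) =
      Beta k n Q * Bxi k n Q := by
    rw [← mul_assoc, hg, one_mul]
  rw [← key_rel] at h1
  rw [← h1, map_mul, mul_assoc]

end Relations
open Polynomial in
theorem B_spanning (n : ℕ) (hn : 2 ≤ n) (k : Type*) [Field k] [IsAlgClosed k]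
    [CharZero k] (Q : k) (hQ : IsPrimitiveRoot Q n) :
    (⊤ : Submodule k (BAlgebra k n Q)) =
      Submodule.span k (Set.range fun t : Fin n × Fin n × Fin n =>
        Ba k n Q ^ (t.1 : ℕ) * Bxi k n Q ^ (t.2.1 : ℕ) *
          Beta k n Q ^ (t.2.2 : ℕ)) ∧
    Module.finrank k (BAlgebra k n Q) ≤ n ^ 3 := by
  classical
  haveI : NeZero n := ⟨by omega⟩
  have npos : 0 < n := by omega
  set a := Ba k n Q with ha_def
  set x := Bxi k n Q with hx_def
  set y := Beta k n Q with hy_def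
  set f : Fin n × Fin n × Fin n → BAlgebra k n Q :=
    fun t => a ^ (t.1 : ℕ) * x ^ (t.2.1 : ℕ) * y ^ (t.2.2 : ℕ) with hf
  set S : Submodule k (BAlgebra k n Q) := Submodule.span k (Set.range f) with hSdef
  have ha : a ^ n = 1 := Ba_pow_n
  have hx : x ^ n = 1 := Bxi_pow_n
  have hy : y ^ n = 1 := Beta_pow_n
  have hxa : x * a = Q • (a * x) := Bxi_Ba
  have hya : y * a = Q • (a * y) := Beta_Ba
  obtain ⟨Cp, hC⟩ := exists_C hn hQ
  -- membership of all reduced monomials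
  have memS : ∀ i j m : ℕ, a ^ i * x ^ j * y ^ m ∈ S := by
    intro i j m
    rw [pow_reduce npos ha i, pow_reduce npos hx j, pow_reduce npos hy m]
    exact Submodule.subset_span
      ⟨(⟨i % n, Nat.mod_lt _ npos⟩, ⟨j % n, Nat.mod_lt _ npos⟩, ⟨m % n, Nat.mod_lt _ npos⟩), rfl⟩
  -- polynomials in a lie in the span of the powers of a
  have aeval_mem : ∀ p : k[X], aeval a p ∈
      Submodule.span k (Set.range fun q : Fin n => a ^ (q : ℕ)) := by
    intro p
    induction p using Polynomial.induction_on' with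
    | add p q hp hq =>
      rw [map_add]; exact Submodule.add_mem _ hp hq
    | monomial m c =>
      rw [aeval_monomial, ← Algebra.smul_def, pow_reduce npos ha m]
      exact Submodule.smul_mem _ _
        (Submodule.subset_span ⟨⟨m % n, Nat.mod_lt _ npos⟩, rfl⟩)
  -- moving η past powers of ξ
  have etaxi_pow : ∀ j : ℕ, y * x ^ j ∈
      Submodule.span k (Set.range fun p : Fin n => a ^ (p : ℕ) * x ^ j * y) := by
    intro j
    induction j with
    | zero =>
      refine Submodule.subset_span ⟨⟨0, npos⟩, ?_⟩
      simp
    | succ j ih =>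
      have h1 : y * x ^ (j + 1) = (aeval a Cp * x) * (y * x ^ j) := by
        calc y * x ^ (j + 1) = (y * x) * x ^ j := by rw [pow_succ', ← mul_assoc]
        _ = (aeval a Cp * (x * y)) * x ^ j := by rw [hC]
        _ = (aeval a Cp * x) * (y * x ^ j) := by
            simp only [mul_assoc]
      rw [h1]
      refine map_span_mem (BmulL (aeval a Cp * x)) ih ?_
      rintro z ⟨p, rfl⟩
      simp only [BmulL_apply]
      have hswap := swap_pow hxa (p : ℕ)
      have h2 : (aeval a Cp * x) * (a ^ (p : ℕ) * x ^ j * y)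
          = Q ^ (p : ℕ) • (aeval a (Cp * Polynomial.X ^ (p : ℕ)) * (x ^ (j + 1) * y)) := by
        rw [map_mul, aeval_X_pow]
        calc (aeval a Cp * x) * (a ^ (p : ℕ) * x ^ j * y)
            = aeval a Cp * ((x * a ^ (p : ℕ)) * (x ^ j * y)) := by
              simp only [mul_assoc]
        _ = aeval a Cp * ((Q ^ (p : ℕ) • (a ^ (p : ℕ) * x)) * (x ^ j * y)) := by rw [hswap]
        _ = Q ^ (p : ℕ) • (aeval a Cp * a ^ (p : ℕ) * (x ^ (j + 1) * y)) := by
              simp only [smul_mul_assoc, mul_smul_comm, pow_succ', mul_assoc]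
      rw [h2]
      refine Submodule.smul_mem _ _ ?_
      refine map_span_mem (BmulR (x ^ (j + 1) * y))
        (aeval_mem (Cp * Polynomial.X ^ (p : ℕ))) ?_
      rintro z ⟨q, rfl⟩
      simp only [BmulR_apply]
      have h3 : a ^ (q : ℕ) * (x ^ (j + 1) * y) = a ^ (q : ℕ) * x ^ (j + 1) * y := by
        rw [mul_assoc]
      rw [h3]
      exact Submodule.subset_span ⟨q, rfl⟩
  have one_mem_S : (1 : BAlgebra k n Q) ∈ S := by
    have h := memS 0 0 0
    simpa using h
  have hmulS : ∀ g : BAlgebra k n Q, (∀ t, g * f t ∈ S) → ∀ w ∈ S, g * w ∈ S := by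
    intro g hg w hw
    exact map_span_mem (BmulL g) hw (by rintro z ⟨t, rfl⟩; exact hg t)
  have hgen_a : ∀ w ∈ S, a * w ∈ S := by
    refine hmulS a ?_
    rintro ⟨i, j, m⟩
    show a * (a ^ (i : ℕ) * x ^ (j : ℕ) * y ^ (m : ℕ)) ∈ S
    have h1 : a * (a ^ (i : ℕ) * x ^ (j : ℕ) * y ^ (m : ℕ))
        = a ^ ((i : ℕ) + 1) * x ^ (j : ℕ) * y ^ (m : ℕ) := by
      simp only [pow_succ', mul_assoc]
    rw [h1]; exact memS _ _ _
  have hgen_x : ∀ w ∈ S, x * w ∈ S := by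
    refine hmulS x ?_
    rintro ⟨i, j, m⟩
    show x * (a ^ (i : ℕ) * x ^ (j : ℕ) * y ^ (m : ℕ)) ∈ S
    have h1 : x * (a ^ (i : ℕ) * x ^ (j : ℕ) * y ^ (m : ℕ))
        = Q ^ (i : ℕ) • (a ^ (i : ℕ) * x ^ ((j : ℕ) + 1) * y ^ (m : ℕ)) := by
      calc x * (a ^ (i : ℕ) * x ^ (j : ℕ) * y ^ (m : ℕ))
          = (x * a ^ (i : ℕ)) * (x ^ (j : ℕ) * y ^ (m : ℕ)) := by simp only [mul_assoc]
      _ = (Q ^ (i : ℕ) • (a ^ (i : ℕ) * x)) * (x ^ (j : ℕ) * y ^ (m : ℕ)) := by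
            rw [swap_pow hxa]
      _ = Q ^ (i : ℕ) • (a ^ (i : ℕ) * x ^ ((j : ℕ) + 1) * y ^ (m : ℕ)) := by
            simp only [smul_mul_assoc, pow_succ', mul_assoc]
    rw [h1]
    exact Submodule.smul_mem _ _ (memS _ _ _)
  have hgen_y : ∀ w ∈ S, y * w ∈ S := by
    refine hmulS y ?_
    rintro ⟨i, j, m⟩
    show y * (a ^ (i : ℕ) * x ^ (j : ℕ) * y ^ (m : ℕ)) ∈ S
    have h1 : y * (a ^ (i : ℕ) * x ^ (j : ℕ) * y ^ (m : ℕ))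
        = Q ^ (i : ℕ) • (a ^ (i : ℕ) * ((y * x ^ (j : ℕ)) * y ^ (m : ℕ))) := by
      calc y * (a ^ (i : ℕ) * x ^ (j : ℕ) * y ^ (m : ℕ))
          = (y * a ^ (i : ℕ)) * (x ^ (j : ℕ) * y ^ (m : ℕ)) := by simp only [mul_assoc]
      _ = (Q ^ (i : ℕ) • (a ^ (i : ℕ) * y)) * (x ^ (j : ℕ) * y ^ (m : ℕ)) := by
            rw [swap_pow hya]
      _ = Q ^ (i : ℕ) • (a ^ (i : ℕ) * ((y * x ^ (j : ℕ)) * y ^ (m : ℕ))) := by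
            simp only [smul_mul_assoc, mul_assoc]
    rw [h1]
    refine Submodule.smul_mem _ _ ?_
    refine map_span_mem ((BmulL (a ^ (i : ℕ))).comp
      (BmulR (y ^ (m : ℕ)))) (etaxi_pow (j : ℕ)) ?_
    rintro z ⟨p, rfl⟩
    simp only [LinearMap.comp_apply, BmulL_apply, BmulR_apply]
    have h2 : a ^ (i : ℕ) * ((a ^ (p : ℕ) * x ^ (j : ℕ) * y) * y ^ (m : ℕ))
        = a ^ ((i : ℕ) + (p : ℕ)) * x ^ (j : ℕ) * y ^ ((m : ℕ) + 1) := by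
      simp only [pow_add, pow_succ', pow_succ, mul_assoc]
    rw [h2]
    exact memS _ _ _
  -- every element acts on S by left multiplication
  have hT : ∀ z : BAlgebra k n Q, ∀ w ∈ S, z * w ∈ S := by
    let T : Subalgebra k (BAlgebra k n Q) :=
      { carrier := {z | ∀ w ∈ S, z * w ∈ S}
        mul_mem' := fun {z₁ z₂} h1 h2 w hw => by
          rw [mul_assoc]; exact h1 _ (h2 w hw)
        add_mem' := fun {z₁ z₂} h1 h2 w hw => by
          rw [add_mul]; exact Submodule.add_mem _ (h1 w hw) (h2 w hw)
        one_mem' := fun w hw => by rw [one_mul]; exact hw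
        zero_mem' := fun w hw => by rw [zero_mul]; exact Submodule.zero_mem _
        algebraMap_mem' := fun c w hw => by
          rw [← Algebra.smul_def]; exact Submodule.smul_mem _ _ hw }
    intro z
    obtain ⟨p, rfl⟩ := RingQuot.mkAlgHom_surjective k (BRel k n Q) z
    show RingQuot.mkAlgHom k (BRel k n Q) p ∈ T
    induction p using FreeAlgebra.induction with
    | grade0 r =>
      rw [AlgHom.commutes]
      exact T.algebraMap_mem r
    | grade1 i =>
      fin_cases i
      · exact hgen_a
      · exact hgen_x
      · exact hgen_y
    | mul p q hp hq =>
      rw [map_mul]; exact T.mul_mem hp hq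
    | add p q hp hq =>
      rw [map_add]; exact T.add_mem hp hq
  have hSeq : S = ⊤ := by
    rw [Submodule.eq_top_iff']
    intro z
    have h := hT z 1 one_mem_S
    rwa [mul_one] at h
  refine ⟨hSeq.symm, ?_⟩
  have h1 : Module.finrank k (BAlgebra k n Q)
      = Module.finrank k (⊤ : Submodule k (BAlgebra k n Q)) := (finrank_top k _).symm
  rw [h1, ← hSeq, hSdef]
  refine le_trans (finrank_range_le_card f) ?_
  have h2 : Fintype.card (Fin n × Fin n × Fin n) = n ^ 3 := by
    simp [Fintype.card_prod]
    ring
  rw [h2]
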